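/- (Zames–Falb hard IQC) Let f ∈ S(m,L) with ∇f(y_⋆) = 0, and let h_1, ..., h_s ≥ 0 with Σ h_τ ≤ 1. For any sequence y_0, y_1, ... in ℝ^d, writing ỹ_k = y_k - y_⋆ and ũ_k = ∇f(y_k), we have for every k ≥ 0: Σ_{t=0}^{k} (ũ_t - mỹ_t)ᵀ( L(ỹ_t - Σ_{τ=1}^{min(t,s)} h_τ ỹ_{t-τ}) - (ũ_t - Σ_{τ=1}^{min(t,s)} h_τ ũ_{t-τ}) ) ≥ 0. -/

import Mathlib

open RealInnerProductSpace Finset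

section Aux

variable {E : Type*} [NormedAddCommGroup E] [InnerProductSpace ℝ E] [CompleteSpace E]

private lemma grad_inner_const (c u : E) : HasGradientAt (fun v => ⟪c, v⟫) c u := by
  rw [hasGradientAt_iff_hasFDerivAt]
  exact (InnerProductSpace.toDual ℝ E c).hasFDerivAt

private lemma HasGradientAt.sub'' {f g : E → ℝ} {a b x : E} (hf : HasGradientAt f a x)
    (hg : HasGradientAt g b x) : HasGradientAt (fun u => f u - g u) (a - b) x := by
  rw [hasGradientAt_iff_hasFDerivAt] at *
  rw [map_sub]
  exact hf.sub hg

private lemma grad_norm_sq (m : ℝ) (c u : E) :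
    HasGradientAt (fun v => m / 2 * ‖v - c‖ ^ 2) (m • (u - c)) u := by
  have hid : HasFDerivAt (fun v : E => v - c) (ContinuousLinearMap.id ℝ E) u :=
    (hasFDerivAt_id u).sub_const c
  have h1 := (hid.inner ℝ hid).const_mul (m / 2)
  have h2 : HasFDerivAt (fun v : E => m / 2 * ‖v - c‖ ^ 2)
      ((m / 2) • ((fderivInnerCLM ℝ (u - c, u - c)).comp
        ((ContinuousLinearMap.id ℝ E).prod (ContinuousLinearMap.id ℝ E)))) u := by
    refine h1.congr_of_eventuallyEq ?_
    filter_upwards with v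
    rw [real_inner_self_eq_norm_sq]
  rw [hasGradientAt_iff_hasFDerivAt]
  refine h2.congr_fderiv ?_
  ext v
  simp [fderivInnerCLM, inner_sub_left, inner_sub_right, real_inner_comm]
  ring

private lemma line_hasDerivAt (g : E → ℝ) (q : E → E) (hg : ∀ u, HasGradientAt g (q u) u)
    (x v : E) (t : ℝ) :
    HasDerivAt (fun t : ℝ => g (x + t • v)) ⟪q (x + t • v), v⟫ t := by
  have hline : HasDerivAt (fun t : ℝ => x + t • v) v t := by
    simpa using ((hasDerivAt_id t).smul_const v).const_add x
  have := (hasGradientAt_iff_hasFDerivAt.mp (hg (x + t • v))).comp_hasDerivAt t hline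
  have h2 : HasDerivAt (fun t : ℝ => g (x + t • v)) _ t := this
  simpa using h2

private lemma convex_lb (g : E → ℝ) (q : E → E) (hg : ∀ u, HasGradientAt g (q u) u)
    (hmono : ∀ a b, 0 ≤ ⟪q a - q b, a - b⟫) (x z : E) :
    g x + ⟪q x, z - x⟫ ≤ g z := by
  set v := z - x with hv
  set G : ℝ → ℝ := fun t => g (x + t • v) - t * ⟪q x, v⟫ with hG
  have hd : ∀ t : ℝ, HasDerivAt G (⟪q (x + t • v) - q x, v⟫) t := by
    intro t
    have := (line_hasDerivAt g q hg x v t).sub ((hasDerivAt_id t).mul_const ⟪q x, v⟫)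
    have h2 : HasDerivAt G _ t := this
    simpa [inner_sub_left] using h2
  have hmonoG : MonotoneOn G (Set.Icc 0 1) := by
    apply monotoneOn_of_deriv_nonneg (convex_Icc 0 1)
    · exact fun t _ => ((hd t).differentiableAt).continuousAt.continuousWithinAt
    · exact fun t _ => ((hd t).differentiableAt).differentiableWithinAt
    · intro t ht
      rw [interior_Icc] at ht
      rw [(hd t).deriv]
      have h0 := hmono (x + t • v) x
      simp only [add_sub_cancel_left] at h0
      rw [real_inner_smul_right] at h0
      exact nonneg_of_mul_nonneg_right h0 ht.1
  have := hmonoG (Set.left_mem_Icc.mpr zero_le_one) (Set.right_mem_Icc.mpr zero_le_one) zero_le_one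
  simp only [hG, zero_smul, add_zero, zero_mul, sub_zero, one_smul, one_mul] at this
  have hxz : x + v = z := by rw [hv]; abel
  rw [hxz] at this
  linarith

private lemma descent (Lp : ℝ) (g : E → ℝ) (q : E → E)
    (hg : ∀ u, HasGradientAt g (q u) u)
    (hub : ∀ a b, ⟪q a - q b, a - b⟫ ≤ Lp * ‖a - b‖ ^ 2) (x z : E) :
    g z ≤ g x + ⟪q x, z - x⟫ + Lp / 2 * ‖z - x‖ ^ 2 := by
  set v := z - x with hv
  set G : ℝ → ℝ := fun t => g (x + t • v) - t * ⟪q x, v⟫ - Lp / 2 * t ^ 2 * ‖v‖ ^ 2 with hG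
  have hd : ∀ t : ℝ, HasDerivAt G (⟪q (x + t • v) - q x, v⟫ - Lp * t * ‖v‖ ^ 2) t := by
    intro t
    have h1 := (line_hasDerivAt g q hg x v t).sub ((hasDerivAt_id t).mul_const ⟪q x, v⟫)
    have h2 : HasDerivAt (fun t : ℝ => Lp / 2 * t ^ 2 * ‖v‖ ^ 2) (Lp * t * ‖v‖ ^ 2) t := by
      have := (((hasDerivAt_id t).pow 2).const_mul (Lp / 2)).mul_const (‖v‖ ^ 2)
      have h' : HasDerivAt (fun t : ℝ => Lp / 2 * t ^ 2 * ‖v‖ ^ 2) _ t := this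
      convert h' using 1
      simp only [id_eq, pow_one, Nat.cast_ofNat]
      ring
    have := h1.sub h2
    have h3 : HasDerivAt G _ t := this
    simpa [inner_sub_left] using h3
  have hanti : AntitoneOn G (Set.Icc 0 1) := by
    apply antitoneOn_of_deriv_nonpos (convex_Icc 0 1)
    · exact fun t _ => ((hd t).differentiableAt).continuousAt.continuousWithinAt
    · exact fun t _ => ((hd t).differentiableAt).differentiableWithinAt
    · intro t ht
      rw [interior_Icc] at ht
      rw [(hd t).deriv]
      have h0 := hub (x + t • v) x
      simp only [add_sub_cancel_left] at h0
      rw [real_inner_smul_right] at h0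
      have ht0 : (0:ℝ) < t := ht.1
      rw [sub_nonpos]
      have key : t * ⟪q (x + t • v) - q x, v⟫ ≤ t * (Lp * t * ‖v‖ ^ 2) := by
        refine h0.trans_eq ?_
        rw [norm_smul, Real.norm_eq_abs, abs_of_pos ht0]; ring
      exact le_of_mul_le_mul_left key ht0
  have := hanti (Set.left_mem_Icc.mpr zero_le_one) (Set.right_mem_Icc.mpr zero_le_one) zero_le_one
  simp only [hG, zero_smul, add_zero, zero_mul, sub_zero, one_smul, one_mul, one_pow] at this
  have hxz : x + v = z := by rw [hv]; abel
  rw [hxz] at this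
  linarith

/-- The smooth–convex interpolation inequality. -/
private lemma interp (Lp : ℝ) (hLp : 0 < Lp) (g : E → ℝ) (q : E → E)
    (hg : ∀ u, HasGradientAt g (q u) u)
    (hmono : ∀ a b, 0 ≤ ⟪q a - q b, a - b⟫)
    (hub : ∀ a b, ⟪q a - q b, a - b⟫ ≤ Lp * ‖a - b‖ ^ 2) (x z : E) :
    g x - g z + 1 / (2 * Lp) * ‖q x - q z‖ ^ 2 ≤ ⟪q x, x - z⟫ := by
  set g' : E → ℝ := fun u => g u - ⟪q x, u⟫ with hg'def
  set q' : E → E := fun u => q u - q x with hq'def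
  have hg' : ∀ u, HasGradientAt g' (q' u) u :=
    fun u => (hg u).sub'' (grad_inner_const (q x) u)
  have hmono' : ∀ a b, 0 ≤ ⟪q' a - q' b, a - b⟫ := by
    intro a b; simpa [hq'def, sub_sub_sub_cancel_right] using hmono a b
  have hub' : ∀ a b, ⟪q' a - q' b, a - b⟫ ≤ Lp * ‖a - b‖ ^ 2 := by
    intro a b; simpa [hq'def, sub_sub_sub_cancel_right] using hub a b
  set w : E := z - Lp⁻¹ • q' z with hw
  have h1 : g' x ≤ g' w := by
    have := convex_lb g' q' hg' hmono' x w
    simpa [hq'def, sub_self] using this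
  have h2 := descent Lp g' q' hg' hub' z w
  have hwz : w - z = -(Lp⁻¹ • q' z) := by rw [hw]; abel
  have e1 : ⟪q' z, w - z⟫ = -(Lp⁻¹ * ‖q' z‖ ^ 2) := by
    rw [hwz, inner_neg_right, real_inner_smul_right, real_inner_self_eq_norm_sq]
  have e2 : ‖w - z‖ ^ 2 = Lp⁻¹ ^ 2 * ‖q' z‖ ^ 2 := by
    rw [hwz, norm_neg, norm_smul, mul_pow, Real.norm_eq_abs, sq_abs]
  rw [e1, e2] at h2
  have h3 : g' x ≤ g' z - 1 / (2 * Lp) * ‖q' z‖ ^ 2 := by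
    have : Lp / 2 * (Lp⁻¹ ^ 2 * ‖q' z‖ ^ 2) - Lp⁻¹ * ‖q' z‖ ^ 2
        = -(1 / (2 * Lp) * ‖q' z‖ ^ 2) := by
      field_simp; ring
    calc g' x ≤ g' w := h1
      _ ≤ g' z + -(Lp⁻¹ * ‖q' z‖ ^ 2) + Lp / 2 * (Lp⁻¹ ^ 2 * ‖q' z‖ ^ 2) := h2
      _ = g' z - 1 / (2 * Lp) * ‖q' z‖ ^ 2 := by linarith [this]
  have hnorm : ‖q' z‖ = ‖q x - q z‖ := by rw [hq'def]; exact norm_sub_rev _ _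
  simp only [hg'def] at h3
  rw [hnorm] at h3
  rw [inner_sub_right]
  linarith

end Aux

private lemma double_sum_le (s : ℕ) (h : ℕ → ℝ) (hpos : ∀ τ, 0 ≤ h τ)
    (hsum : ∑ τ ∈ Icc 1 s, h τ ≤ 1) (φ : ℕ → ℝ) (hφ : ∀ j, 0 ≤ φ j) (k : ℕ) :
    ∑ t ∈ range (k + 1), ∑ τ ∈ Icc 1 (min t s), h τ * φ (t - τ)
      ≤ ∑ j ∈ range (k + 1), φ j := by
  calc ∑ t ∈ range (k + 1), ∑ τ ∈ Icc 1 (min t s), h τ * φ (t - τ)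
      = ∑ p ∈ (range (k + 1)).sigma (fun t => Icc 1 (min t s)), h p.2 * φ (p.1 - p.2) := by
        rw [Finset.sum_sigma]
    _ = ∑ p ∈ (range (k + 1)).sigma (fun j => Icc 1 (min (k - j) s)), h p.2 * φ p.1 := by
        apply Finset.sum_nbij' (i := fun p => (⟨p.1 - p.2, p.2⟩ : Σ _ : ℕ, ℕ))
          (j := fun p => (⟨p.1 + p.2, p.2⟩ : Σ _ : ℕ, ℕ))
        · intro p hp
          simp only [mem_sigma, mem_range, mem_Icc, le_min_iff, min_le_iff] at hp ⊢
          omega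
        · intro p hp
          simp only [mem_sigma, mem_range, mem_Icc, le_min_iff, min_le_iff] at hp ⊢
          omega
        · rintro ⟨t, τ⟩ hp
          simp only [mem_sigma, mem_range, mem_Icc, le_min_iff, min_le_iff] at hp
          simp only [Sigma.mk.inj_iff, heq_eq_eq, and_true]
          omega
        · rintro ⟨j, τ⟩ hp
          simp only [mem_sigma, mem_range, mem_Icc, le_min_iff, min_le_iff] at hp
          simp only [Sigma.mk.inj_iff, heq_eq_eq, and_true]
          omega
        · intro p hp
          rfl
    _ = ∑ j ∈ range (k + 1), (∑ τ ∈ Icc 1 (min (k - j) s), h τ) * φ j := by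
        rw [Finset.sum_sigma]
        exact Finset.sum_congr rfl fun j _ => by rw [Finset.sum_mul]
    _ ≤ ∑ j ∈ range (k + 1), 1 * φ j := by
        refine Finset.sum_le_sum fun j _ => mul_le_mul_of_nonneg_right ?_ (hφ j)
        refine le_trans (Finset.sum_le_sum_of_subset_of_nonneg ?_ fun τ _ _ => hpos τ) hsum
        exact Finset.Icc_subset_Icc le_rfl (min_le_right _ _)
    _ = ∑ j ∈ range (k + 1), φ j := by simp

/-- The Zames–Falb hard IQC satisfied by the gradient of `f ∈ S(m,L)` at its
minimizer, for nonnegative weights `h₁,…,h_s` summing to at most one. -/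
theorem zames_falb_hard_iqc {d : ℕ} (m L : ℝ) (hm : 0 < m) (hmL : m < L)
    (s : ℕ) (h : ℕ → ℝ) (hpos : ∀ τ, 0 ≤ h τ) (hsum : ∑ τ ∈ Icc 1 s, h τ ≤ 1)
    (f : EuclideanSpace ℝ (Fin d) → ℝ)
    (gf : EuclideanSpace ℝ (Fin d) → EuclideanSpace ℝ (Fin d))
    (hgrad : ∀ x, HasGradientAt f (gf x) x)
    (hlow : ∀ x y, m * ‖x - y‖ ^ 2 ≤ ⟪gf x - gf y, x - y⟫)
    (hup : ∀ x y, ⟪gf x - gf y, x - y⟫ ≤ L * ‖x - y‖ ^ 2)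
    (ystar : EuclideanSpace ℝ (Fin d)) (hstar : gf ystar = 0)
    (y : ℕ → EuclideanSpace ℝ (Fin d)) :
    ∀ k : ℕ,
      0 ≤ ∑ t ∈ range (k + 1),
        ⟪gf (y t) - m • (y t - ystar),
          L • ((y t - ystar) - ∑ τ ∈ Icc 1 (min t s), h τ • (y (t - τ) - ystar))
            - (gf (y t) - ∑ τ ∈ Icc 1 (min t s), h τ • gf (y (t - τ)))⟫ := by
  intro k
  set Lp : ℝ := L - m with hLpdef
  have hLp : 0 < Lp := by simp [hLpdef]; linarith
  set g : EuclideanSpace ℝ (Fin d) → ℝ := fun u => f u - m / 2 * ‖u - ystar‖ ^ 2 with hgdef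
  set q : EuclideanSpace ℝ (Fin d) → EuclideanSpace ℝ (Fin d) := fun u => gf u - m • (u - ystar) with hqdef
  have hgq : ∀ u, HasGradientAt g (q u) u :=
    fun u => (hgrad u).sub'' (grad_norm_sq m ystar u)
  have hinner : ∀ a b : EuclideanSpace ℝ (Fin d), ⟪q a - q b, a - b⟫ = ⟪gf a - gf b, a - b⟫ - m * ‖a - b‖ ^ 2 := by
    intro a b
    have : q a - q b = (gf a - gf b) - m • (a - b) := by
      simp only [hqdef, smul_sub]
      abel
    rw [this, inner_sub_left, real_inner_smul_left, real_inner_self_eq_norm_sq]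
  have hmono' : ∀ a b : EuclideanSpace ℝ (Fin d), 0 ≤ ⟪q a - q b, a - b⟫ := by
    intro a b; rw [hinner]; linarith [hlow a b]
  have hub' : ∀ a b : EuclideanSpace ℝ (Fin d), ⟪q a - q b, a - b⟫ ≤ Lp * ‖a - b‖ ^ 2 := by
    intro a b; rw [hinner, hLpdef]; linarith [hup a b]
  have key := interp Lp hLp g q hgq hmono' hub'
  have hqstar : q ystar = 0 := by simp [hqdef, hstar]
  have hmul : ∀ a b c : ℝ, a + 1 / (2 * Lp) * c ≤ b → Lp * a + 1 / 2 * c ≤ Lp * b := by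
    intro a b c hab
    have h1 := mul_le_mul_of_nonneg_left hab hLp.le
    have h2 : Lp * (a + 1 / (2 * Lp) * c) = Lp * a + 1 / 2 * c := by
      field_simp
    linarith
  -- the storage function
  set φ : ℕ → ℝ := fun j => Lp * (g (y j) - g ystar) - 1 / 2 * ‖q (y j)‖ ^ 2 with hφdef
  have hφ : ∀ j, 0 ≤ φ j := by
    intro j
    have hk := key ystar (y j)
    rw [hqstar, inner_zero_left, zero_sub, norm_neg] at hk
    have := hmul _ _ _ hk
    simp only [hφdef]
    linarith
  -- scalar form of the IQC terms
  set D : ℕ → ℕ → ℝ := fun t j => Lp * ⟪q (y t), y j - ystar⟫ - ⟪q (y t), q (y j)⟫ with hDdef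
  -- diagonal bound
  have hDt : ∀ t, φ t ≤ D t t := by
    intro t
    have hk := key (y t) ystar
    rw [hqstar, sub_zero] at hk
    have h1 := hmul _ _ _ hk
    have h2 : ⟪q (y t), q (y t)⟫ = ‖q (y t)‖ ^ 2 := real_inner_self_eq_norm_sq _
    simp only [hDdef, hφdef]
    linarith
  -- cross bound
  have hDc : ∀ t j, D t j ≤ D t t - φ t + φ j := by
    intro t j
    have hk := key (y t) (y j)
    have hyy : y t - y j = y t - ystar - (y j - ystar) := by abel
    rw [hyy, inner_sub_right] at hk
    have hns : ‖q (y t) - q (y j)‖ ^ 2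
        = ‖q (y t)‖ ^ 2 - 2 * ⟪q (y t), q (y j)⟫ + ‖q (y j)‖ ^ 2 := by
      rw [@norm_sub_sq_real]
    rw [hns] at hk
    have h1 := hmul _ _ _ hk
    have h2 : ⟪q (y t), q (y t)⟫ = ‖q (y t)‖ ^ 2 := real_inner_self_eq_norm_sq _
    simp only [hDdef, hφdef]
    linarith
  -- the summand identity
  have hsummand : ∀ t,
      ⟪gf (y t) - m • (y t - ystar),
          L • ((y t - ystar) - ∑ τ ∈ Icc 1 (min t s), h τ • (y (t - τ) - ystar))
            - (gf (y t) - ∑ τ ∈ Icc 1 (min t s), h τ • gf (y (t - τ)))⟫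
        = D t t - ∑ τ ∈ Icc 1 (min t s), h τ * D t (t - τ) := by
    intro t
    have hfirst : gf (y t) - m • (y t - ystar) = q (y t) := by rw [hqdef]
    have hgfq : ∀ j, ⟪q (y t), gf (y j)⟫
        = ⟪q (y t), q (y j)⟫ + m * ⟪q (y t), y j - ystar⟫ := by
      intro j
      simp only [hqdef]
      rw [inner_sub_right, real_inner_smul_right]
      ring
    have hDexp : ∀ j, D t j
        = L * ⟪q (y t), y j - ystar⟫ - ⟪q (y t), gf (y j)⟫ := by
      intro j
      simp only [hDdef, hLpdef]
      rw [hgfq j]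
      ring
    have hsplit : ∀ (a c : ℝ) (b e : ℕ → ℝ),
        L * (a - ∑ τ ∈ Icc 1 (min t s), h τ * b τ)
            - (c - ∑ τ ∈ Icc 1 (min t s), h τ * e τ)
          = (L * a - c) - ∑ τ ∈ Icc 1 (min t s), h τ * (L * b τ - e τ) := by
      intro a c b e
      conv_rhs => rw [Finset.sum_congr rfl
        (fun τ _ => (by ring : h τ * (L * b τ - e τ) = L * (h τ * b τ) - h τ * e τ))]
      rw [Finset.sum_sub_distrib, ← Finset.mul_sum]
      ring
    rw [hfirst]
    simp only [inner_sub_right, inner_sum, real_inner_smul_right]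
    rw [hsplit]
    simp only [hDexp, inner_sub_right]
  -- per-step lower bound
  have hstep : ∀ t, φ t - ∑ τ ∈ Icc 1 (min t s), h τ * φ (t - τ)
      ≤ D t t - ∑ τ ∈ Icc 1 (min t s), h τ * D t (t - τ) := by
    intro t
    set H : ℝ := ∑ τ ∈ Icc 1 (min t s), h τ with hHdef
    have hH0 : 0 ≤ H := Finset.sum_nonneg fun τ _ => hpos τ
    have hH1 : H ≤ 1 := by
      refine le_trans (Finset.sum_le_sum_of_subset_of_nonneg ?_ fun τ _ _ => hpos τ) hsum
      exact Finset.Icc_subset_Icc le_rfl (min_le_right _ _)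
    have hsum1 : ∑ τ ∈ Icc 1 (min t s), h τ * D t (t - τ)
        ≤ ∑ τ ∈ Icc 1 (min t s), h τ * (D t t - φ t + φ (t - τ)) :=
      Finset.sum_le_sum fun τ _ => mul_le_mul_of_nonneg_left (hDc t (t - τ)) (hpos τ)
    have hsum2 : ∑ τ ∈ Icc 1 (min t s), h τ * (D t t - φ t + φ (t - τ))
        = H * (D t t - φ t) + ∑ τ ∈ Icc 1 (min t s), h τ * φ (t - τ) := by
      rw [hHdef, Finset.sum_mul, ← Finset.sum_add_distrib]
      exact Finset.sum_congr rfl fun τ _ => by ring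
    have hA := hDt t
    have hprod : 0 ≤ (1 - H) * (D t t - φ t) :=
      mul_nonneg (by linarith) (by linarith)
    nlinarith [hsum1, hsum2, hA, hH0, hH1, hprod]
  calc (0:ℝ) ≤ ∑ t ∈ range (k + 1),
        (φ t - ∑ τ ∈ Icc 1 (min t s), h τ * φ (t - τ)) := by
        rw [Finset.sum_sub_distrib]
        have := double_sum_le s h hpos hsum φ hφ k
        linarith
    _ ≤ ∑ t ∈ range (k + 1),
        (D t t - ∑ τ ∈ Icc 1 (min t s), h τ * D t (t - τ)) :=
        Finset.sum_le_sum fun t _ => hstep t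
    _ = ∑ t ∈ range (k + 1),
        ⟪gf (y t) - m • (y t - ystar),
          L • ((y t - ystar) - ∑ τ ∈ Icc 1 (min t s), h τ • (y (t - τ) - ystar))
            - (gf (y t) - ∑ τ ∈ Icc 1 (min t s), h τ • gf (y (t - τ)))⟫ :=
        Finset.sum_congr rfl fun t _ => (hsummand t).symm
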